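/- With m(y*) = (1/π) erf(y*/√2)/y*, one has d/dy* log m(y*) = √(2/π) e^{−y*²/2}/erf(y*/√2) − 1/y*, and this tends to 0 as |y*| → ∞. Consequently, by Tweedie's formula, E(b | y*) − y* → 0 as |y*| → ∞ (bounded influence of the prior). -/

import Mathlib

open MeasureTheory Real Set Filter

/-- The error function erf(x) = (2/√π) ∫₀^x e^{−t²} dt. -/
noncomputable def erf (x : ℝ) : ℝ :=
  (2 / Real.sqrt π) * ∫ t in (0:ℝ)..x, exp (-t ^ 2)

lemma cont_expsq : Continuous fun t : ℝ => exp (-t ^ 2) := by continuity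

lemma erf_hasDerivAt (x : ℝ) : HasDerivAt erf (2 / Real.sqrt π * exp (-x ^ 2)) x := by
  have h : HasDerivAt (fun x : ℝ => ∫ t in (0:ℝ)..x, exp (-t ^ 2)) (exp (-x ^ 2)) x :=
    intervalIntegral.integral_hasDerivAt_right (cont_expsq.intervalIntegrable _ _)
      (cont_expsq.stronglyMeasurableAtFilter _ _) cont_expsq.continuousAt
  show HasDerivAt (fun x => erf x) _ x
  simpa [erf] using h.const_mul (2 / Real.sqrt π)

lemma erf_pos {x : ℝ} (hx : 0 < x) : 0 < erf x := by
  have h : 0 < ∫ t in (0:ℝ)..x, exp (-t ^ 2) :=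
    intervalIntegral.intervalIntegral_pos_of_pos (cont_expsq.intervalIntegrable _ _)
      (fun t => exp_pos _) hx
  have hc : 0 < 2 / Real.sqrt π := by positivity
  exact mul_pos hc h

lemma erf_neg (x : ℝ) : erf (-x) = -erf x := by
  unfold erf
  have : ∫ t in (0:ℝ)..(-x), exp (-t ^ 2) = - ∫ t in (0:ℝ)..x, exp (-t ^ 2) := by
    have h := intervalIntegral.integral_comp_neg (a := (0:ℝ)) (b := x)
      (fun t => exp (-t ^ 2))
    simp only [neg_neg, neg_zero] at h
    have h2 : (∫ t in (0:ℝ)..x, exp (-t ^ 2)) = ∫ t in (-x)..(0:ℝ), exp (-t ^ 2) := by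
      simpa [neg_sq] using h
    rw [intervalIntegral.integral_symm (-x) 0, h2]
  rw [this]; ring

lemma erf_ne_zero {y : ℝ} (hy : y ≠ 0) : erf y ≠ 0 := by
  rcases hy.lt_or_gt with h | h
  · have := erf_pos (x := -y) (by linarith)
    rw [erf_neg] at this; intro h0; rw [h0] at this; simp at this
  · exact (erf_pos h).ne'

lemma tendsto_erf_atTop : Tendsto erf atTop (nhds 1) := by
  have hint : IntegrableOn (fun t : ℝ => exp (-t ^ 2)) (Ioi 0) := by
    have := integrableOn_Ioi_exp_neg_mul_sq_iff (b := 1) |>.mpr one_pos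
    simpa using this
  have h := intervalIntegral_tendsto_integral_Ioi (μ := volume) 0 hint tendsto_id
  have hval : ∫ t in Ioi (0:ℝ), exp (-t ^ 2) = Real.sqrt π / 2 := by
    have := integral_gaussian_Ioi 1
    simpa using this
  rw [hval] at h
  have := h.const_mul (2 / Real.sqrt π)
  have hπ : Real.sqrt π ≠ 0 := by positivity
  have : (2 / Real.sqrt π) * (Real.sqrt π / 2) = 1 := by field_simp
  show Tendsto (fun x => erf x) atTop (nhds 1)
  simpa [erf, this] using (h.const_mul (2 / Real.sqrt π))

lemma tendsto_erf_atBot : Tendsto erf atBot (nhds (-1)) := by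
  have h := (tendsto_erf_atTop.comp tendsto_neg_atBot_atTop).neg
  simp only [Function.comp] at h
  refine h.congr fun x => ?_
  rw [← erf_neg, neg_neg]

lemma deriv_logm {y : ℝ} (hy : y ≠ 0) :
    deriv (fun t => Real.log ((1 / π) * erf (t / Real.sqrt 2) / t)) y
      = Real.sqrt (2 / π) * exp (-y ^ 2 / 2) / erf (y / Real.sqrt 2) - 1 / y := by
  have hs2 : Real.sqrt 2 ≠ 0 := by positivity
  have hsπ : Real.sqrt π ≠ 0 := by positivity
  have hπ : (π : ℝ) ≠ 0 := pi_ne_zero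
  have hyd : y / Real.sqrt 2 ≠ 0 := div_ne_zero hy hs2
  have he : erf (y / Real.sqrt 2) ≠ 0 := erf_ne_zero hyd
  have h1 : HasDerivAt (fun t : ℝ => erf (t / Real.sqrt 2))
      (2 / Real.sqrt π * exp (-(y / Real.sqrt 2) ^ 2) * (1 / Real.sqrt 2)) y := by
    have := (erf_hasDerivAt (y / Real.sqrt 2)).comp y ((hasDerivAt_id y).div_const (Real.sqrt 2))
    simpa [one_div, Function.comp_def] using this
  have h2 : HasDerivAt (fun t : ℝ => (1 / π) * erf (t / Real.sqrt 2) / t)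
      ((1 / π * (2 / Real.sqrt π * exp (-(y / Real.sqrt 2) ^ 2) * (1 / Real.sqrt 2)) * y
        - 1 / π * erf (y / Real.sqrt 2) * 1) / y ^ 2) y :=
    (h1.const_mul (1 / π)).div (hasDerivAt_id y) hy
  have hgne : (1 / π) * erf (y / Real.sqrt 2) / y ≠ 0 := by
    apply div_ne_zero _ hy
    exact mul_ne_zero (by positivity) he
  have h3 := (h2.log hgne)
  rw [h3.deriv]
  have hsq : (y / Real.sqrt 2) ^ 2 = y ^ 2 / 2 := by
    rw [div_pow, Real.sq_sqrt (by norm_num : (0:ℝ) ≤ 2)]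
  rw [hsq, Real.sqrt_div (by norm_num : (0:ℝ) ≤ 2)]
  have h22 : Real.sqrt 2 * Real.sqrt 2 = 2 := Real.mul_self_sqrt (by norm_num)
  have hπ2 : Real.sqrt π * Real.sqrt π = π := Real.mul_self_sqrt pi_pos.le
  rw [neg_div]
  field_simp
  ring_nf
  rw [show (Real.sqrt 2 : ℝ) ^ 2 = 2 from by rw [sq, h22]]

lemma tendsto_sq_cocompact_half :
    Tendsto (fun y : ℝ => -y ^ 2 / 2) (cocompact ℝ) atBot := by
  rw [cocompact_eq_atBot_atTop, tendsto_sup]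
  have hTop : Tendsto (fun y : ℝ => y ^ 2) atTop atTop := tendsto_pow_atTop two_ne_zero
  have hBot : Tendsto (fun y : ℝ => y ^ 2) atBot atTop := by
    have := hTop.comp tendsto_neg_atBot_atTop
    refine this.congr fun y => ?_
    simp [Function.comp, neg_sq]
  have h2 : (0:ℝ) < 2 := two_pos
  constructor
  · have hB : Tendsto (fun y : ℝ => y ^ 2 / 2) atBot atTop := hBot.atTop_div_const h2
    have hB2 : Tendsto (fun y : ℝ => -(y ^ 2 / 2)) atBot atBot := tendsto_neg_atTop_atBot.comp hB
    exact hB2.congr fun y => by rw [neg_div]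
  · have hT : Tendsto (fun y : ℝ => y ^ 2 / 2) atTop atTop := hTop.atTop_div_const h2
    have hT2 : Tendsto (fun y : ℝ => -(y ^ 2 / 2)) atTop atBot := tendsto_neg_atTop_atBot.comp hT
    exact hT2.congr fun y => by rw [neg_div]

lemma tendsto_erf_arg_cocompact :
    Tendsto (fun y : ℝ => Real.sqrt (2 / π) * exp (-y ^ 2 / 2) / erf (y / Real.sqrt 2) - 1 / y)
      (cocompact ℝ) (nhds 0) := by
  have hs2 : (0:ℝ) < Real.sqrt 2 := by positivity
  have hexp : Tendsto (fun y : ℝ => Real.sqrt (2 / π) * exp (-y ^ 2 / 2)) (cocompact ℝ)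
      (nhds 0) := by
    have := (Real.tendsto_exp_atBot.comp tendsto_sq_cocompact_half).const_mul (Real.sqrt (2 / π))
    simpa using this
  have hinv : Tendsto (fun y : ℝ => 1 / y) (cocompact ℝ) (nhds 0) := by
    rw [cocompact_eq_atBot_atTop, tendsto_sup]
    constructor
    · have hneg : Tendsto (fun y : ℝ => -y) atBot atTop := tendsto_neg_atBot_atTop
      have h : Tendsto (fun y : ℝ => -(-y)⁻¹) atBot (nhds (-0)) :=
        (tendsto_inv_atTop_zero.comp hneg).neg
      rw [neg_zero] at h
      exact h.congr fun y => by rw [inv_neg, neg_neg, one_div]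
    · simpa [one_div] using tendsto_inv_atTop_zero
  have hratio : Tendsto (fun y : ℝ => Real.sqrt (2 / π) * exp (-y ^ 2 / 2) / erf (y / Real.sqrt 2))
      (cocompact ℝ) (nhds 0) := by
    rw [cocompact_eq_atBot_atTop, tendsto_sup] at hexp ⊢
    constructor
    · have hden : Tendsto (fun y : ℝ => erf (y / Real.sqrt 2)) atBot (nhds (-1)) :=
        tendsto_erf_atBot.comp (tendsto_id.atBot_div_const hs2)
      simpa [Pi.div_def] using hexp.1.div hden (by norm_num)
    · have hden : Tendsto (fun y : ℝ => erf (y / Real.sqrt 2)) atTop (nhds 1) :=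
        tendsto_erf_atTop.comp (tendsto_id.atTop_div_const hs2)
      simpa [Pi.div_def] using hexp.2.div hden one_ne_zero
  simpa using hratio.sub hinv

/-- with m(y*) = (1/π) erf(y*/√2)/y*, one has
d/dy* log m(y*) = √(2/π) e^{−y*²/2}/erf(y*/√2) − 1/y*, this tends to 0 as |y*| → ∞, and
consequently (via Tweedie's formula E(b|y*) = y* + (log m)'(y*)) the posterior mean
satisfies E(b | y*) − y* → 0 as |y*| → ∞ (bounded influence). -/
theorem horseshoe_bounded_influence :
    (∀ y : ℝ, y ≠ 0 →
      deriv (fun t => Real.log ((1 / π) * erf (t / Real.sqrt 2) / t)) y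
        = Real.sqrt (2 / π) * exp (-y ^ 2 / 2) / erf (y / Real.sqrt 2) - 1 / y) ∧
    Tendsto (fun y : ℝ =>
        deriv (fun t => Real.log ((1 / π) * erf (t / Real.sqrt 2) / t)) y)
      (cocompact ℝ) (nhds 0) ∧
    Tendsto (fun y : ℝ =>
        (y + deriv (fun t => Real.log ((1 / π) * erf (t / Real.sqrt 2) / t)) y) - y)
      (cocompact ℝ) (nhds 0) := by
  have hmain : Tendsto (fun y : ℝ =>
      deriv (fun t => Real.log ((1 / π) * erf (t / Real.sqrt 2) / t)) y)
      (cocompact ℝ) (nhds 0) := by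
    have hne : ∀ᶠ y : ℝ in cocompact ℝ, y ≠ 0 :=
      (isCompact_singleton (x := (0:ℝ))).compl_mem_cocompact
    exact tendsto_erf_arg_cocompact.congr'
      (hne.mono fun y hy => (deriv_logm hy).symm)
  refine ⟨fun y hy => deriv_logm hy, hmain, ?_⟩
  simpa [add_sub_cancel_left] using hmain
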